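/- For a smooth toric surface X_A coming from a point configuration A ⊂ ℤ² with convex hull Q, the degree of the Hurwitz form in Plücker coordinates, computed as (1/2)·Σ_i ξ_T(ω_i) for any triangulation T where ξ_T = 2η_{T,2} − η_{T,1}, equals 3·vol(Q) − vol(∂Q). -/

import Mathlib

open MeasureTheory

/-- Embedding of lattice points into the plane. -/
noncomputable def emb : ℤ × ℤ → ℝ × ℝ := fun p => ((p.1 : ℝ), (p.2 : ℝ))

/-- Normalized area of a planar region: twice its Lebesgue measure. -/
noncomputable def nvol2 (s : Set (ℝ × ℝ)) : ℝ := 2 * (volume s).toReal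

/-- The closed triangle spanned by a triple of lattice points. -/
noncomputable def triSet (σ : Fin 3 → ℤ × ℤ) : Set (ℝ × ℝ) :=
  convexHull ℝ (emb '' Set.range σ)

/-- Lattice length of the segment from `e.1` to `e.2`. -/
def llen (e : (ℤ × ℤ) × (ℤ × ℤ)) : ℕ :=
  Int.gcd (e.2.1 - e.1.1) (e.2.2 - e.1.2)

/-- The closed segment spanned by an edge. -/
noncomputable def seg (e : (ℤ × ℤ) × (ℤ × ℤ)) : Set (ℝ × ℝ) :=
  segment ℝ (emb e.1) (emb e.2)

/-- `η_{T,2}(ω)`. -/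
noncomputable def eta2 (T : Finset (Fin 3 → ℤ × ℤ)) (ω : ℤ × ℤ) : ℝ :=
  ∑ σ ∈ T, if ∃ i, σ i = ω then nvol2 (triSet σ) else 0

/-- `η_{T,1}(ω)`. -/
noncomputable def eta1 (E : Finset ((ℤ × ℤ) × (ℤ × ℤ))) (ω : ℤ × ℤ) : ℝ :=
  ∑ e ∈ E, if e.1 = ω ∨ e.2 = ω then (llen e : ℝ) else 0

/-- The Hurwitz vector `ξ_T = 2η_{T,2} − η_{T,1}`. -/
noncomputable def xiT (T : Finset (Fin 3 → ℤ × ℤ))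
    (E : Finset ((ℤ × ℤ) × (ℤ × ℤ))) (ω : ℤ × ℤ) : ℝ :=
  2 * eta2 T ω - eta1 E ω

namespace HW

attribute [local instance] Classical.propDecidable

lemma emb_inj : Function.Injective emb := by
  intro p q h
  have h1 : (p.1 : ℝ) = q.1 := congrArg Prod.fst h
  have h2 : (p.2 : ℝ) = q.2 := congrArg Prod.snd h
  exact Prod.ext (by exact_mod_cast h1) (by exact_mod_cast h2)

/-- dot product on ℝ². -/
def dot (u v : ℝ × ℝ) : ℝ := u.1 * v.1 + u.2 * v.2

/-- cross product on ℝ². -/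
def cross (u v : ℝ × ℝ) : ℝ := u.1 * v.2 - u.2 * v.1

lemma cross_self (v : ℝ × ℝ) : cross v v = 0 := by simp [cross]; ring

lemma dot_sub (u v w : ℝ × ℝ) : dot u (v - w) = dot u v - dot u w := by
  unfold dot; simp only [Prod.fst_sub, Prod.snd_sub]; ring

lemma dot_smul' (u : ℝ × ℝ) (c : ℝ) (v : ℝ × ℝ) : dot u (c • v) = c * dot u v := by
  unfold dot; simp only [Prod.smul_fst, Prod.smul_snd, smul_eq_mul]; ring

lemma dot_add (u v w : ℝ × ℝ) : dot u (v + w) = dot u v + dot u w := by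
  unfold dot; simp only [Prod.fst_add, Prod.snd_add]; ring

lemma cross_eq_zero_of_dot {u v w : ℝ × ℝ} (hu : u ≠ 0) (hv : dot u v = 0)
    (hw : dot u w = 0) : cross v w = 0 := by
  by_contra hc
  apply hu
  have h1 : u.1 * cross v w = 0 := by
    unfold dot cross at *; linear_combination w.2 * hv - v.2 * hw
  have h2 : u.2 * cross v w = 0 := by
    unfold dot cross at *; linear_combination (-w.1) * hv + v.1 * hw
  have e1 : u.1 = 0 := by rcases mul_eq_zero.1 h1 with h | h; exact h; exact absurd h hc
  have e2 : u.2 = 0 := by rcases mul_eq_zero.1 h2 with h | h; exact h; exact absurd h hc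
  exact Prod.ext e1 e2

lemma exists_smul_of_cross_eq_zero {v w : ℝ × ℝ} (hv : v ≠ 0) (h : cross v w = 0) :
    ∃ κ : ℝ, w = κ • v := by
  unfold cross at h
  by_cases h1 : v.1 ≠ 0
  · refine ⟨w.1 / v.1, ?_⟩
    have : w.2 = w.1 / v.1 * v.2 := by field_simp; linarith
    exact Prod.ext (by rw [Prod.smul_fst, smul_eq_mul, div_mul_cancel₀ _ h1]) this
  · push_neg at h1
    have h2 : v.2 ≠ 0 := by
      intro h2; exact hv (Prod.ext h1 h2)
    refine ⟨w.2 / v.2, ?_⟩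
    have hw1 : w.1 = 0 := by
      have hh : v.1 * w.2 - v.2 * w.1 = 0 := h
      rw [h1] at hh; simp at hh
      rcases hh with h' | h'; exact absurd h' h2; exact h'
    refine Prod.ext ?_ ?_
    · show w.1 = ((w.2 / v.2) • v).1
      simp [hw1, h1]
    · show w.2 = ((w.2 / v.2) • v).2
      simp [smul_eq_mul]; field_simp

lemma smul_cancel {v : ℝ × ℝ} (hv : v ≠ 0) {κ κ' : ℝ} (h : κ • v = κ' • v) : κ = κ' := by
  have : (κ - κ') • v = 0 := by rw [sub_smul, h, sub_self]
  rcases smul_eq_zero.1 this with h | h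
  · linarith [sub_eq_zero.1 (by linarith [h] : κ - κ' = 0)]
  · exact absurd h hv

lemma dot_rep (f : (ℝ × ℝ) →L[ℝ] ℝ) (y : ℝ × ℝ) :
    f y = dot (f (1, 0), f (0, 1)) y := by
  have hy : y = y.1 • ((1 : ℝ), (0 : ℝ)) + y.2 • ((0 : ℝ), (1 : ℝ)) := by
    ext <;> simp
  rw [hy, map_add, f.map_smul, f.map_smul]
  simp [dot]; ring

/-- existence of a supporting functional at a frontier point. -/
lemma support_at {Q : Set (ℝ × ℝ)} (hconv : Convex ℝ Q)
    (hdim : (interior Q).Nonempty) {x : ℝ × ℝ} (hx : x ∈ frontier Q) :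
    ∃ u : ℝ × ℝ, u ≠ 0 ∧ ∀ y ∈ Q, dot u y ≤ dot u x := by
  have hxint : x ∉ interior Q := hx.2
  obtain ⟨f, hf⟩ := geometric_hahn_banach_open_point hconv.interior isOpen_interior hxint
  obtain ⟨z, hz⟩ := hdim
  have key : ∀ y ∈ Q, f y ≤ f x := by
    intro y hy
    by_contra hgt
    push_neg at hgt
    have hzx : f z < f x := hf z hz
    have h1 : 0 < f y - f z := by linarith
    set t : ℝ := (f y - f x) / (f y - f z) with ht
    have ht0 : 0 < t := div_pos (by linarith) h1
    have ht1 : t ≤ 1 := by rw [div_le_one h1]; linarith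
    have hmem : t • z + (1 - t) • y ∈ interior Q :=
      hconv.combo_interior_closure_mem_interior hz (subset_closure hy) ht0
        (by linarith) (by ring)
    have hlt := hf _ hmem
    rw [map_add, f.map_smul, f.map_smul, smul_eq_mul, smul_eq_mul] at hlt
    have heq : t * (f y - f z) = f y - f x := by
      rw [ht]; field_simp
    nlinarith
  refine ⟨(f (1, 0), f (0, 1)), ?_, fun y hy => ?_⟩
  · intro h0
    have hz2 : f z < f x := hf z hz
    rw [dot_rep f z, dot_rep f x, h0] at hz2
    simp [dot] at hz2
  · rw [← dot_rep, ← dot_rep]; exact key y hy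

lemma dot_const_on_seg {u a b w : ℝ × ℝ} (hw : w ∈ segment ℝ a b)
    (h : dot u b = dot u a) : dot u w = dot u a := by
  rw [segment_eq_image'] at hw
  obtain ⟨θ, _, rfl⟩ := hw
  unfold dot at *
  simp only [Prod.fst_add, Prod.snd_add, Prod.smul_fst, Prod.smul_snd, Prod.fst_sub,
    Prod.snd_sub, smul_eq_mul]
  linear_combination θ * h

/-- a supporting functional that is constant on a boundary segment. -/
lemma support_seg {Q : Set (ℝ × ℝ)} (hconv : Convex ℝ Q) (hcl : IsClosed Q)
    (hdim : (interior Q).Nonempty) {a b : ℝ × ℝ} (hseg : segment ℝ a b ⊆ frontier Q) :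
    ∃ u : ℝ × ℝ, u ≠ 0 ∧ dot u b = dot u a ∧ ∀ y ∈ Q, dot u y ≤ dot u a := by
  have hfr : frontier Q ⊆ Q := fun y hy => hcl.closure_eq ▸ hy.1
  set m : ℝ × ℝ := (1 / 2 : ℝ) • a + (1 / 2 : ℝ) • b with hm
  have hmseg : m ∈ segment ℝ a b := ⟨1 / 2, 1 / 2, by norm_num, by norm_num, by norm_num, rfl⟩
  obtain ⟨u, hu0, hsup⟩ := support_at hconv hdim (hseg hmseg)
  have ha : dot u a ≤ dot u m := hsup a (hfr (hseg (left_mem_segment ℝ a b)))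
  have hb : dot u b ≤ dot u m := hsup b (hfr (hseg (right_mem_segment ℝ a b)))
  have hmval : dot u m = 1 / 2 * dot u a + 1 / 2 * dot u b := by
    unfold dot
    simp only [hm, Prod.fst_add, Prod.snd_add, Prod.smul_fst, Prod.smul_snd, smul_eq_mul]
    ring
  have heq : dot u b = dot u a := by linarith
  exact ⟨u, hu0, heq, fun y hy => by linarith [hsup y hy]⟩

/-- a frontier point cannot be a strict convex combination of points of `Q`
spanning the plane. -/
lemma not_frontier_combo {Q : Set (ℝ × ℝ)} (hconv : Convex ℝ Q)
    (hdim : (interior Q).Nonempty) {x p1 p2 p3 : ℝ × ℝ} (hx : x ∈ frontier Q)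
    (h1 : p1 ∈ Q) (h2 : p2 ∈ Q) (h3 : p3 ∈ Q) {α β γ : ℝ}
    (hα : 0 < α) (hβ : 0 < β) (hγ : 0 < γ) (hsum : α + β + γ = 1)
    (hcombo : x = α • p1 + β • p2 + γ • p3)
    (hind : cross (p2 - p1) (p3 - p1) ≠ 0) : False := by
  obtain ⟨u, hu0, hsup⟩ := support_at hconv hdim hx
  have e1 := hsup p1 h1
  have e2 := hsup p2 h2
  have e3 := hsup p3 h3
  have hxval : dot u x = α * dot u p1 + β * dot u p2 + γ * dot u p3 := by
    rw [hcombo]; unfold dot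
    simp only [Prod.fst_add, Prod.snd_add, Prod.smul_fst, Prod.smul_snd, smul_eq_mul]
    ring
  have hs : α * (dot u x - dot u p1) + β * (dot u x - dot u p2)
      + γ * (dot u x - dot u p3) = 0 := by
    linear_combination (dot u x) * hsum + hxval
  have n1 : 0 ≤ α * (dot u x - dot u p1) := mul_nonneg hα.le (by linarith)
  have n2 : 0 ≤ β * (dot u x - dot u p2) := mul_nonneg hβ.le (by linarith)
  have n3 : 0 ≤ γ * (dot u x - dot u p3) := mul_nonneg hγ.le (by linarith)
  have t1 : α * (dot u x - dot u p1) = 0 := by linarith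
  have t2 : β * (dot u x - dot u p2) = 0 := by linarith
  have t3 : γ * (dot u x - dot u p3) = 0 := by linarith
  have q1 : dot u p1 = dot u x := by
    rcases mul_eq_zero.1 t1 with h | h
    · exact absurd h hα.ne'
    · linarith
  have q2 : dot u p2 = dot u x := by
    rcases mul_eq_zero.1 t2 with h | h
    · exact absurd h hβ.ne'
    · linarith
  have q3 : dot u p3 = dot u x := by
    rcases mul_eq_zero.1 t3 with h | h
    · exact absurd h hγ.ne'
    · linarith
  have d1 : dot u (p2 - p1) = 0 := by
    unfold dot at *
    simp only [Prod.fst_sub, Prod.snd_sub]; linarith [q1, q2]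
  have d2 : dot u (p3 - p1) = 0 := by
    unfold dot at *
    simp only [Prod.fst_sub, Prod.snd_sub]; linarith [q1, q3]
  exact hind (cross_eq_zero_of_dot hu0 d1 d2)

/-- the set of lattice points on a lattice segment. -/
lemma lattice_on_seg (e : (ℤ × ℤ) × (ℤ × ℤ)) (hab : e.1 ≠ e.2) :
    {p : ℤ × ℤ | emb p ∈ seg e} =
      (fun k : ℤ => (e.1.1 + k * ((e.2.1 - e.1.1) / (llen e : ℤ)),
        e.1.2 + k * ((e.2.2 - e.1.2) / (llen e : ℤ)))) '' Set.Icc 0 (llen e : ℤ) := by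
  set a := e.1 with hadef
  set b := e.2 with hbdef
  have hgN : 0 < Int.gcd (b.1 - a.1) (b.2 - a.2) := by
    rw [Int.gcd_pos_iff]
    by_contra hc; push_neg at hc
    exact hab (Prod.ext (by linarith [hc.1]) (by linarith [hc.2])).symm
  set g : ℤ := (llen e : ℤ) with hgdef
  have hg0 : 0 < g := by
    show (0:ℤ) < ((Int.gcd (b.1 - a.1) (b.2 - a.2) : ℕ) : ℤ)
    exact_mod_cast hgN
  set d1 : ℤ := (b.1 - a.1) / g with hd1def
  set d2 : ℤ := (b.2 - a.2) / g with hd2def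
  have hdvd1 : g ∣ b.1 - a.1 := Int.gcd_dvd_left _ _
  have hdvd2 : g ∣ b.2 - a.2 := Int.gcd_dvd_right _ _
  have hd1 : g * d1 = b.1 - a.1 := Int.mul_ediv_cancel' hdvd1
  have hd2 : g * d2 = b.2 - a.2 := Int.mul_ediv_cancel' hdvd2
  have hcop : Int.gcd d1 d2 = 1 := Int.gcd_div_gcd_div_gcd hgN
  obtain ⟨m, n, hmn⟩ : ∃ m n : ℤ, m * d1 + n * d2 = 1 := by
    refine ⟨Int.gcdA d1 d2, Int.gcdB d1 d2, ?_⟩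
    have h := Int.gcd_eq_gcd_ab d1 d2
    rw [hcop] at h
    push_cast at h
    linarith [h]
  have e1 : ((g : ℝ)) * ((d1 : ℝ)) = ((b.1 : ℝ) - (a.1 : ℝ)) := by exact_mod_cast hd1
  have e2 : ((g : ℝ)) * ((d2 : ℝ)) = ((b.2 : ℝ) - (a.2 : ℝ)) := by exact_mod_cast hd2
  have hmnR : (m : ℝ) * (d1 : ℝ) + (n : ℝ) * (d2 : ℝ) = 1 := by exact_mod_cast hmn
  have hgR : (0 : ℝ) < (g : ℝ) := by exact_mod_cast hg0
  ext p
  simp only [Set.mem_setOf_eq, Set.mem_image, Set.mem_Icc]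
  constructor
  · intro hp
    rw [seg, segment_eq_image'] at hp
    obtain ⟨θ, hθ, hpeq⟩ := hp
    have hc1 : (p.1 : ℝ) - a.1 = θ * ((g:ℝ) * d1) := by
      have h := congrArg Prod.fst hpeq
      simp only [emb, Prod.fst_add, Prod.smul_fst, Prod.fst_sub, smul_eq_mul] at h
      rw [e1]; linarith [h]
    have hc2 : (p.2 : ℝ) - a.2 = θ * ((g:ℝ) * d2) := by
      have h := congrArg Prod.snd hpeq
      simp only [emb, Prod.snd_add, Prod.smul_snd, Prod.snd_sub, smul_eq_mul] at h
      rw [e2]; linarith [h]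
    have hk : ((m * (p.1 - a.1) + n * (p.2 - a.2) : ℤ) : ℝ) = θ * g := by
      push_cast
      linear_combination (m:ℝ) * hc1 + (n:ℝ) * hc2 + (θ * (g:ℝ)) * hmnR
    set k : ℤ := m * (p.1 - a.1) + n * (p.2 - a.2) with hkdef
    refine ⟨k, ⟨?_, ?_⟩, ?_⟩
    · have : (0 : ℝ) ≤ (k : ℝ) := by rw [hk]; exact mul_nonneg hθ.1 hgR.le
      exact_mod_cast this
    · have : (k : ℝ) ≤ (g : ℝ) := by
        rw [hk]
        nlinarith [hθ.2, hgR]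
      exact_mod_cast this
    · have hp1 : ((a.1 + k * d1 : ℤ) : ℝ) = (p.1 : ℝ) := by
        push_cast
        linear_combination -hc1 + (d1:ℝ) * hk
      have hp2 : ((a.2 + k * d2 : ℤ) : ℝ) = (p.2 : ℝ) := by
        push_cast
        linear_combination -hc2 + (d2:ℝ) * hk
      exact Prod.ext (by exact_mod_cast hp1) (by exact_mod_cast hp2)
  · rintro ⟨k, ⟨hk0, hkg⟩, rfl⟩
    rw [seg, segment_eq_image']
    have hk0R : (0:ℝ) ≤ (k:ℝ) := by exact_mod_cast hk0
    have hkgR : (k:ℝ) ≤ (g:ℝ) := by exact_mod_cast hkg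
    refine ⟨(k : ℝ) / (g : ℝ), ⟨by positivity, by rw [div_le_one hgR]; exact hkgR⟩, ?_⟩
    refine Prod.ext ?_ ?_ <;>
      simp only [emb, Prod.fst_add, Prod.snd_add, Prod.smul_fst, Prod.smul_snd,
        Prod.fst_sub, Prod.snd_sub, smul_eq_mul] <;> push_cast
    · rw [← e1]; field_simp; ring
    · rw [← e2]; field_simp; ring

lemma lattice_dir_ne (e : (ℤ × ℤ) × (ℤ × ℤ)) (hab : e.1 ≠ e.2) :
    ¬((e.2.1 - e.1.1) / (llen e : ℤ) = 0 ∧ (e.2.2 - e.1.2) / (llen e : ℤ) = 0) := by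
  rintro ⟨h1, h2⟩
  have hdvd1 : ((llen e : ℤ)) ∣ e.2.1 - e.1.1 := Int.gcd_dvd_left _ _
  have hdvd2 : ((llen e : ℤ)) ∣ e.2.2 - e.1.2 := Int.gcd_dvd_right _ _
  have q1 := Int.mul_ediv_cancel' hdvd1
  have q2 := Int.mul_ediv_cancel' hdvd2
  rw [h1, mul_zero] at q1
  rw [h2, mul_zero] at q2
  exact hab (Prod.ext (by linarith) (by linarith)).symm

lemma lattice_on_seg_finite (e : (ℤ × ℤ) × (ℤ × ℤ)) (hab : e.1 ≠ e.2) :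
    {p : ℤ × ℤ | emb p ∈ seg e}.Finite := by
  rw [lattice_on_seg e hab]
  exact (Set.finite_Icc _ _).image _

lemma lattice_on_seg_ncard (e : (ℤ × ℤ) × (ℤ × ℤ)) (hab : e.1 ≠ e.2) :
    {p : ℤ × ℤ | emb p ∈ seg e}.ncard = llen e + 1 := by
  rw [lattice_on_seg e hab]
  have hinj : Function.Injective (fun k : ℤ => (e.1.1 + k * ((e.2.1 - e.1.1) / (llen e : ℤ)),
      e.1.2 + k * ((e.2.2 - e.1.2) / (llen e : ℤ)))) := by
    intro k k' hkk
    have h1 := congrArg Prod.fst hkk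
    have h2 := congrArg Prod.snd hkk
    simp only at h1 h2
    rcases not_and_or.1 (lattice_dir_ne e hab) with h | h
    · exact mul_right_cancel₀ h (by linarith [h1] : k * ((e.2.1 - e.1.1) / (llen e : ℤ)) = k' * ((e.2.1 - e.1.1) / (llen e : ℤ)))
    · exact mul_right_cancel₀ h (by linarith [h2] : k * ((e.2.2 - e.1.2) / (llen e : ℤ)) = k' * ((e.2.2 - e.1.2) / (llen e : ℤ)))
  rw [Set.ncard_image_of_injective _ hinj]
  rw [← Finset.coe_Icc, Set.ncard_coe_finset, Int.card_Icc]
  omega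

lemma isCompact_segment (a b : ℝ × ℝ) : IsCompact (segment ℝ a b) := by
  rw [segment_eq_image']
  exact (isCompact_Icc).image (by fun_prop)

/-- points of nonempty finitely many closed sets not containing `p` stay at positive
distance from `p`. -/
lemma sep_lemma (E : Finset ((ℤ × ℤ) × (ℤ × ℤ))) (p : ℝ × ℝ) :
    ∃ δ > 0, ∀ e ∈ E, p ∉ seg e → ∀ y ∈ seg e, δ ≤ dist p y := by
  classical
  induction E using Finset.induction_on with
  | empty => exact ⟨1, one_pos, by simp⟩
  | @insert e E he ih =>
    obtain ⟨δ, hδ0, hδ⟩ := ih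
    by_cases hp : p ∈ seg e
    · refine ⟨δ, hδ0, fun f hf hpf y hy => ?_⟩
      rcases Finset.mem_insert.1 hf with rfl | hf
      · exact absurd hp hpf
      · exact hδ f hf hpf y hy
    · have hclosed : IsClosed (seg e) := (isCompact_segment _ _).isClosed
      have hne : (seg e).Nonempty := ⟨emb e.1, left_mem_segment ℝ _ _⟩
      have hpos : 0 < Metric.infDist p (seg e) :=
        (hclosed.notMem_iff_infDist_pos hne).1 hp
      refine ⟨min δ (Metric.infDist p (seg e)), lt_min hδ0 hpos, fun f hf hpf y hy => ?_⟩
      rcases Finset.mem_insert.1 hf with rfl | hf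
      · exact le_trans (min_le_right _ _) (Metric.infDist_le_dist_of_mem hy)
      · exact le_trans (min_le_left _ _) (hδ f hf hpf y hy)

/-- a segment from inside to outside meets the frontier. -/
lemma segment_inter_frontier {Q : Set (ℝ × ℝ)} (hcl : IsClosed Q) {a b : ℝ × ℝ}
    (ha : a ∈ Q) (hb : b ∉ Q) : ∃ c ∈ segment ℝ a b, c ∈ frontier Q := by
  by_contra hc
  push_neg at hc
  have hpre : IsPreconnected (segment ℝ a b) := (convex_segment a b).isPreconnected
  have hsub : segment ℝ a b ⊆ interior Q ∪ (closure Q)ᶜ := by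
    intro y hy
    have hyf : y ∉ frontier Q := hc y hy
    by_cases hyQ : y ∈ closure Q
    · left; by_contra hyi; exact hyf ⟨hyQ, hyi⟩
    · right; exact hyQ
  have h1 : (segment ℝ a b ∩ interior Q).Nonempty := by
    refine ⟨a, left_mem_segment ℝ a b, ?_⟩
    rcases hsub (left_mem_segment ℝ a b) with h | h
    · exact h
    · exact absurd (subset_closure ha) h
  have h2 : (segment ℝ a b ∩ (closure Q)ᶜ).Nonempty := by
    refine ⟨b, right_mem_segment ℝ a b, ?_⟩
    rcases hsub (right_mem_segment ℝ a b) with h | h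
    · exact absurd (interior_subset h) hb
    · exact h
  obtain ⟨y, -, hy1, hy2⟩ := hpre (interior Q) (closure Q)ᶜ isOpen_interior
    (isClosed_closure.isOpen_compl) hsub h1 h2
  exact hy2 (subset_closure (interior_subset hy1))

lemma cross_smul_right (u : ℝ × ℝ) (c : ℝ) (v : ℝ × ℝ) :
    cross u (c • v) = c * cross u v := by
  unfold cross; simp only [Prod.smul_fst, Prod.smul_snd, smul_eq_mul]; ring

lemma cross_add_right (u v w : ℝ × ℝ) : cross u (v + w) = cross u v + cross u w := by
  unfold cross; simp only [Prod.fst_add, Prod.snd_add]; ring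

lemma cross_sub_right (u v w : ℝ × ℝ) : cross u (v - w) = cross u v - cross u w := by
  unfold cross; simp only [Prod.fst_sub, Prod.snd_sub]; ring

lemma dot_self_pos {u : ℝ × ℝ} (hu : u ≠ 0) : 0 < dot u u := by
  have h1 : u.1 ≠ 0 ∨ u.2 ≠ 0 := by
    by_contra hc; push_neg at hc; exact hu (Prod.ext hc.1 hc.2)
  unfold dot
  rcases h1 with h | h
  · have := mul_self_pos.2 h; nlinarith [mul_self_nonneg u.2]
  · have := mul_self_pos.2 h; nlinarith [mul_self_nonneg u.1]

/-- the perpendicular vector. -/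
def perp (v : ℝ × ℝ) : ℝ × ℝ := (-v.2, v.1)

lemma perp_ne_zero {v : ℝ × ℝ} (hv : v ≠ 0) : perp v ≠ 0 := by
  intro hc
  have h1 : v.1 = 0 := by
    have := congrArg Prod.snd hc; simpa [perp] using this
  have h2 : v.2 = 0 := by
    have := congrArg Prod.fst hc
    simp only [perp, Prod.fst_zero] at this
    linarith
  exact hv (Prod.ext h1 h2)

lemma cross_perp_self (v : ℝ × ℝ) (u : ℝ × ℝ) (h : dot u v = 0) :
    cross (perp v) u = 0 := by
  unfold cross perp dot at *; simp only; linarith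

lemma dot_smul_perp (lam : ℝ) (v w : ℝ × ℝ) :
    dot (lam • perp v) w = lam * cross v w := by
  unfold dot perp cross
  simp only [Prod.smul_fst, Prod.smul_snd, smul_eq_mul]
  ring

lemma cross_antisymm (v w : ℝ × ℝ) : cross v w = - cross w v := by
  unfold cross; ring

lemma sign_lemma {lam mu c : ℝ} (h1 : lam * c < 0) (h2 : mu * (-c) < 0) :
    lam * mu < 0 := by
  have h3 : 0 < mu * c := by linarith
  rcases lt_trichotomy c 0 with hc | hc | hc
  · have hl : 0 < lam := by
      by_contra h; push_neg at h
      nlinarith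
    have hm : mu < 0 := by
      by_contra h; push_neg at h
      nlinarith
    exact mul_neg_of_pos_of_neg hl hm
  · rw [hc] at h1; simp at h1
  · have hl : lam < 0 := by
      by_contra h; push_neg at h; nlinarith
    have hm : 0 < mu := by
      by_contra h; push_neg at h; nlinarith
    exact mul_neg_of_neg_of_pos hl hm

lemma three_sign_lemma {l1 l2 l3 c12 c13 c23 : ℝ}
    (h12 : l1 * c12 < 0) (h13 : l1 * c13 < 0)
    (h21 : l2 * (-c12) < 0) (h23 : l2 * c23 < 0)
    (h31 : l3 * (-c13) < 0) (h32 : l3 * (-c23) < 0) : False := by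
  have A : l1 * l2 < 0 := sign_lemma h12 h21
  have B : l1 * l3 < 0 := sign_lemma h13 h31
  have C : l2 * l3 < 0 := sign_lemma h23 h32
  nlinarith [mul_pos_of_neg_of_neg A B, C, mul_self_nonneg l1]

lemma norm_smul_lt_of_le {v : ℝ × ℝ} {s c : ℝ} (hs0 : 0 < s) (hb : 0 < c)
    (hsc : s ≤ c / (‖v‖ + 1)) : ‖s • v‖ < c := by
  rw [norm_smul, Real.norm_eq_abs, abs_of_pos hs0]
  have h1 : s * ‖v‖ ≤ (c / (‖v‖ + 1)) * ‖v‖ := mul_le_mul_of_nonneg_right hsc (norm_nonneg v)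
  have h2 : (c / (‖v‖ + 1)) * (‖v‖ + 1) = c := by
    field_simp
  have h3 : 0 < c / (‖v‖ + 1) := by positivity
  nlinarith [norm_nonneg v]

lemma extreme_out {Q : Set (ℝ × ℝ)} (hconv : Convex ℝ Q) {x z bP : ℝ × ℝ}
    (hzint : z ∈ interior Q) (hx : x ∉ interior Q) {α : ℝ} (hα0 : 0 < α)
    (hbP : bP = x + α • (x - z)) : bP ∉ Q := by
  intro hbQ
  have hsum : α • z + bP = (1 + α) • x := by rw [hbP]; module
  have hx' : (α / (1 + α)) • z + (1 / (1 + α)) • bP ∈ interior Q :=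
    hconv.combo_interior_closure_mem_interior hzint (subset_closure hbQ)
      (by positivity) (by positivity) (by field_simp; ring)
  have h2 : (1 + α) • ((α / (1 + α)) • z + (1 / (1 + α)) • bP) = (1 + α) • x := by
    rw [smul_add, smul_smul, smul_smul,
      (show (1 + α) * (α / (1 + α)) = α by field_simp),
      (show (1 + α) * (1 / (1 + α)) = 1 by field_simp), one_smul, hsum]
  have h3 := smul_right_injective (ℝ × ℝ) (show (1 + α) ≠ 0 by positivity) h2
  rw [h3] at hx'
  exact hx hx'

section Main

variable {E : Finset ((ℤ × ℤ) × (ℤ × ℤ))} {Q : Set (ℝ × ℝ)}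
variable (hconv : Convex ℝ Q) (hcl : IsClosed Q) (hdim : (interior Q).Nonempty)
variable (hE : ∀ e ∈ E, e.1 ≠ e.2)
variable (hEbd : (⋃ e ∈ E, seg e) = frontier Q)
variable (hEdisj : ∀ e ∈ E, ∀ f ∈ E, e ≠ f → (seg e ∩ seg f).Subsingleton)

include hconv hcl hdim hE hEbd hEdisj in
/-- Claim A: a point in the relative interior of an edge lies on no other edge. -/
lemma relint_unique {e f : (ℤ × ℤ) × (ℤ × ℤ)} (he : e ∈ E) (hf : f ∈ E) {x : ℝ × ℝ}
    (hxe : x ∈ openSegment ℝ (emb e.1) (emb e.2)) (hxf : x ∈ seg f) : f = e := by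
  by_contra hne
  have hfr : frontier Q ⊆ Q := fun y hy => hcl.closure_eq ▸ hy.1
  have hsegsub : ∀ {e'}, e' ∈ E → seg e' ⊆ frontier Q := fun {e'} he' =>
    hEbd ▸ Set.subset_biUnion_of_mem he'
  obtain ⟨u, hu0, hconst, hsup⟩ := support_seg hconv hcl hdim (hsegsub he)
  set a := emb e.1 with hadef
  set b := emb e.2 with hbdef
  set D := b - a with hDdef
  have hD0 : D ≠ 0 := sub_ne_zero.2 fun hc => hE e he (emb_inj hc).symm
  rw [openSegment_eq_image'] at hxe
  obtain ⟨s, hs, hxeq⟩ := hxe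
  set ε : ℝ := min s (1 - s) with hεdef
  have hε0 : 0 < ε := lt_min hs.1 (by linarith [hs.2])
  have hεs : ε ≤ s := min_le_left _ _
  have hεs' : ε ≤ 1 - s := min_le_right _ _
  have hxseg : x ∈ seg e := by
    rw [seg, segment_eq_image']
    exact ⟨s, ⟨hs.1.le, hs.2.le⟩, hxeq⟩
  have hxc : dot u x = dot u a := dot_const_on_seg hxseg hconst
  -- every point of seg f has the same dot product with u
  have hflat : ∀ y ∈ seg f, dot u y = dot u a := by
    intro y hy
    have hyQ : y ∈ Q := hfr (hsegsub hf hy)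
    have hle : dot u y ≤ dot u a := hsup y hyQ
    rcases eq_or_lt_of_le hle with h | hlt
    · exact h
    exfalso
    -- the midpoint of x and y is a frontier point strictly inside a triangle
    set w : ℝ × ℝ := (1 / 2 : ℝ) • x + (1 / 2 : ℝ) • y with hwdef
    have hwf : w ∈ seg f := (convex_segment _ _) hxf hy (by norm_num) (by norm_num) (by norm_num)
    have hP1 : a + (s - ε) • D ∈ Q := by
      apply hfr; apply hsegsub he
      rw [seg, segment_eq_image']
      exact ⟨s - ε, ⟨by linarith, by linarith [hs.2]⟩, rfl⟩
    have hP2 : a + (s + ε) • D ∈ Q := by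
      apply hfr; apply hsegsub he
      rw [seg, segment_eq_image']
      exact ⟨s + ε, ⟨by linarith [hs.1], by linarith⟩, rfl⟩
    have hcombo : w = (1/4 : ℝ) • (a + (s - ε) • D) + (1/4 : ℝ) • (a + (s + ε) • D)
        + (1/2 : ℝ) • y := by
      rw [hwdef, ← hxeq]
      module
    have hcross : cross ((a + (s + ε) • D) - (a + (s - ε) • D)) (y - (a + (s - ε) • D)) ≠ 0 := by
      have hsimp1 : (a + (s + ε) • D) - (a + (s - ε) • D) = (2 * ε) • D := by module
      have hsimp2 : y - (a + (s - ε) • D) = (y - x) + ε • D := by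
        rw [← hxeq]; module
      rw [hsimp1, hsimp2]
      intro hc
      -- cross (2ε • D) (y - x + ε • D) = 2ε (cross D (y-x))
      have hexp : cross ((2 * ε) • D) ((y - x) + ε • D) = (2 * ε) * cross D (y - x) := by
        unfold cross
        simp only [Prod.smul_fst, Prod.smul_snd, Prod.fst_add, Prod.snd_add, Prod.fst_sub,
          Prod.snd_sub, smul_eq_mul]
        ring
      rw [hexp] at hc
      have hcd : cross D (y - x) = 0 := by
        rcases mul_eq_zero.1 hc with h | h
        · linarith
        · exact h
      obtain ⟨κ, hκ⟩ := exists_smul_of_cross_eq_zero hD0 hcd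
      -- then dot u (y - x) = 0, contradiction with hlt
      have hdotD : dot u D = 0 := by
        rw [hDdef, dot_sub, hconst, sub_self]
      have hzero : dot u (y - x) = 0 := by
        rw [hκ, dot_smul', hdotD, mul_zero]
      rw [dot_sub] at hzero
      linarith
    exact not_frontier_combo hconv hdim (hsegsub hf hwf) hP1 hP2 hyQ
      (by norm_num) (by norm_num) (by norm_num) (by norm_num) hcombo hcross
  -- hence seg f is contained in the line through x with direction D
  have hdotD : dot u D = 0 := by
    rw [hDdef, dot_sub, hconst, sub_self]
  -- pick a point of seg f different from x
  obtain ⟨y₀, hy₀f, hy₀x⟩ : ∃ y₀ ∈ seg f, y₀ ≠ x := by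
    by_cases h1 : emb f.1 = x
    · refine ⟨emb f.2, right_mem_segment ℝ _ _, fun hc => ?_⟩
      exact hE f hf (emb_inj (by rw [h1, hc]))
    · exact ⟨emb f.1, left_mem_segment ℝ _ _, h1⟩
  have hy₀dot : dot u (y₀ - x) = 0 := by
    rw [dot_sub, hflat y₀ hy₀f, hxc, sub_self]
  have hcr : cross D (y₀ - x) = 0 := cross_eq_zero_of_dot hu0 hdotD hy₀dot
  obtain ⟨κ, hκ⟩ := exists_smul_of_cross_eq_zero hD0 hcr
  have hκ0 : κ ≠ 0 := by
    intro hc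
    rw [hc, zero_smul] at hκ
    exact hy₀x (by rwa [sub_eq_zero] at hκ)
  -- the point z := x + λκ • D lies in both segments, with λκ ≠ 0
  set lam : ℝ := min 1 (ε / |κ|) with hlamdef
  have hlam0 : 0 < lam := lt_min one_pos (div_pos hε0 (abs_pos.2 hκ0))
  have hlam1 : lam ≤ 1 := min_le_left _ _
  have hlamκ : |lam * κ| ≤ ε := by
    rw [abs_mul, abs_of_pos hlam0]
    calc lam * |κ| ≤ (ε / |κ|) * |κ| := by
          apply mul_le_mul_of_nonneg_right (min_le_right _ _) (abs_nonneg _)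
      _ = ε := by field_simp
  set z : ℝ × ℝ := x + (lam * κ) • D with hzdef
  have hzf : z ∈ seg f := by
    have : z = (1 - lam) • x + lam • y₀ := by
      rw [hzdef, sub_eq_iff_eq_add.1 hκ]; module
    rw [this]
    exact (convex_segment _ _) hxf hy₀f (by linarith) hlam0.le (by ring)
  have hze : z ∈ seg e := by
    rw [seg, segment_eq_image']
    refine ⟨s + lam * κ, ⟨?_, ?_⟩, ?_⟩
    · cases abs_le.1 hlamκ; linarith
    · cases abs_le.1 hlamκ; linarith
    · rw [hzdef, ← hxeq]; module
  have hzx : z ≠ x := by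
    rw [hzdef]
    intro hc
    have h0 : (lam * κ) • D = 0 := by
      have := sub_eq_zero.2 hc
      rwa [add_sub_cancel_left] at this
    rcases smul_eq_zero.1 h0 with h | h
    · exact mul_ne_zero hlam0.ne' hκ0 h
    · exact hD0 h
  have hsub := hEdisj e he f hf (Ne.symm hne)
  exact hzx (hsub ⟨hze, hzf⟩ ⟨hxseg, hxf⟩)


include hconv hcl hdim hE hEbd hEdisj in
/-- Claim B: a frontier lattice point that is not in the relative interior of any
edge lies on exactly two edges. -/
lemma endpoint_two {p : ℤ × ℤ} (hp : emb p ∈ frontier Q)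
    (hni : ∀ e ∈ E, emb p ∉ openSegment ℝ (emb e.1) (emb e.2)) :
    (E.filter (fun e => emb p ∈ seg e)).card = 2 := by
  classical
  have hfr : frontier Q ⊆ Q := fun y hy => hcl.closure_eq ▸ hy.1
  have hsegsub : ∀ {e'}, e' ∈ E → seg e' ⊆ frontier Q := fun {e'} he' =>
    hEbd ▸ Set.subset_biUnion_of_mem he'
  set x := emb p with hxdef
  have hxQ : x ∈ Q := hfr hp
  -- data of "other endpoint"
  have hother : ∀ e ∈ E, x ∈ seg e →
      ∃ y : ℝ × ℝ, y ∈ Q ∧ y - x ≠ 0 ∧ seg e = segment ℝ x y := by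
    intro e he hxe
    have hmem := hxe
    rw [seg, ← insert_endpoints_openSegment] at hmem
    have hne : emb e.1 ≠ emb e.2 := fun hc => hE e he (emb_inj hc)
    rcases Set.mem_insert_iff.1 hmem with h1 | hmem2
    · refine ⟨emb e.2, hfr (hsegsub he (right_mem_segment ℝ _ _)), ?_, ?_⟩
      · rw [h1]; exact sub_ne_zero.2 (Ne.symm hne)
      · rw [seg, h1]
    · rcases Set.mem_insert_iff.1 hmem2 with h2 | h3
      · refine ⟨emb e.1, hfr (hsegsub he (left_mem_segment ℝ _ _)), ?_, ?_⟩
        · rw [h2]; exact sub_ne_zero.2 hne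
        · rw [seg, h2]; exact segment_symm ℝ _ _
      · exact absurd h3 (hni e he)
  -- supporting functional constant on a given edge through x
  have hsupofseg : ∀ e ∈ E, ∀ y : ℝ × ℝ, seg e = segment ℝ x y →
      ∃ u : ℝ × ℝ, u ≠ 0 ∧ dot u (y - x) = 0 ∧ ∀ q ∈ Q, dot u q ≤ dot u x := by
    intro e he y hsege
    obtain ⟨u, hu0, hconst, hsup⟩ := support_seg hconv hcl hdim (hsegsub he)
    have hxm : x ∈ segment ℝ (emb e.1) (emb e.2) := by
      have : x ∈ seg e := by rw [hsege]; exact left_mem_segment ℝ x y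
      exact this
    have hym : y ∈ segment ℝ (emb e.1) (emb e.2) := by
      have : y ∈ seg e := by rw [hsege]; exact right_mem_segment ℝ x y
      exact this
    have hx' : dot u x = dot u (emb e.1) := dot_const_on_seg hxm hconst
    have hy' : dot u y = dot u (emb e.1) := dot_const_on_seg hym hconst
    refine ⟨u, hu0, by rw [dot_sub, hx', hy', sub_self], fun q hq => ?_⟩
    rw [hx']; exact hsup q hq
  -- two edges through x pointing in positively proportional directions coincide
  have hsamedir : ∀ e ∈ E, ∀ f ∈ E, ∀ y y' : ℝ × ℝ, seg e = segment ℝ x y →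
      seg f = segment ℝ x y' → ∀ κ : ℝ, 0 < κ → y' - x = κ • (y - x) →
      y - x ≠ 0 → e = f := by
    intro e he f hf y y' hsege hsegf κ hκpos hκ hy0
    by_contra hne
    have hsub := hEdisj e he f hf hne
    set lam : ℝ := min 1 κ with hlamdef
    have hlam0 : 0 < lam := lt_min one_pos hκpos
    have hlam1 : lam ≤ 1 := min_le_left _ _
    have hlamκ : lam ≤ κ := min_le_right _ _
    set z : ℝ × ℝ := x + lam • (y - x) with hzdef
    have hze : z ∈ seg e := by
      rw [hsege, segment_eq_image']
      exact ⟨lam, ⟨hlam0.le, hlam1⟩, rfl⟩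
    have hzf : z ∈ seg f := by
      rw [hsegf, segment_eq_image']
      refine ⟨lam / κ, ⟨by positivity, ?_⟩, ?_⟩
      · rw [div_le_one hκpos]; exact hlamκ
      · show x + (lam / κ) • (y' - x) = z
        rw [hκ, smul_smul, div_mul_cancel₀ _ hκpos.ne', hzdef]
    have hxe : x ∈ seg e := by rw [hsege]; exact left_mem_segment ℝ x y
    have hxf : x ∈ seg f := by rw [hsegf]; exact left_mem_segment ℝ x y'
    have hzx : z ≠ x := by
      rw [hzdef]
      intro hc
      have h0 : lam • (y - x) = 0 := by
        have := sub_eq_zero.2 hc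
        rwa [add_sub_cancel_left] at this
      rcases smul_eq_zero.1 h0 with h | h
      · exact hlam0.ne' h
      · exact hy0 h
    exact hzx (hsub ⟨hze, hzf⟩ ⟨hxe, hxf⟩)
  -- there is at least one edge through x
  obtain ⟨e₀, he₀, hxe₀⟩ : ∃ e ∈ E, x ∈ seg e := by
    have hx' : x ∈ ⋃ e ∈ E, seg e := hEbd ▸ hp
    simpa using hx'
  obtain ⟨δ, hδ0, hδ⟩ := sep_lemma E x
  -- pick up an edge through x containing a given nearby frontier point
  have hgrab : ∀ w : ℝ × ℝ, w ∈ frontier Q → dist x w < δ →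
      ∃ f ∈ E, x ∈ seg f ∧ w ∈ seg f := by
    intro w hwfr hwδ
    have : w ∈ ⋃ e ∈ E, seg e := hEbd ▸ hwfr
    simp only [Set.mem_iUnion, exists_prop] at this
    obtain ⟨f, hfE, hwf⟩ := this
    refine ⟨f, hfE, ?_, hwf⟩
    by_contra hxf
    linarith [hδ f hfE hxf w hwf]
  by_cases hext : ∃ a ∈ Q, ∃ b ∈ Q, a ≠ b ∧ x ∈ openSegment ℝ a b
  · -- non-extreme case
    obtain ⟨a, ha, b, hb, hab, hxab⟩ := hext
    rw [openSegment_eq_image'] at hxab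
    obtain ⟨t, ht, hxeq⟩ := hxab
    set D : ℝ × ℝ := b - a with hDdef
    have hD0 : D ≠ 0 := sub_ne_zero.2 (Ne.symm hab)
    -- the segment [a,b] lies in the frontier
    have habfr : ∀ τ : ℝ, 0 ≤ τ → τ ≤ 1 → a + τ • D ∈ frontier Q := by
      intro τ h0 h1
      have hQm : a + τ • D ∈ Q := by
        have h' := hconv ha hb (by linarith : (0:ℝ) ≤ 1 - τ) h0 (by ring)
        have heq : a + τ • D = (1 - τ) • a + τ • b := by rw [hDdef]; module
        rwa [heq]
      refine ⟨subset_closure hQm, ?_⟩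
      intro hint
      obtain ⟨u, hu0, hsup⟩ := support_at hconv hdim hp
      have hda : dot u a ≤ dot u x := hsup a ha
      have hdb : dot u b ≤ dot u x := hsup b hb
      have hxv : dot u x = dot u a + t * (dot u b - dot u a) := by
        rw [← hxeq]
        show dot u (a + t • (b - a)) = _
        rw [dot_add, dot_smul', dot_sub]
      have hzero : (1 - t) * (dot u x - dot u a) + t * (dot u x - dot u b) = 0 := by
        linear_combination hxv
      have n1 : 0 ≤ (1 - t) * (dot u x - dot u a) :=
        mul_nonneg (by linarith [ht.2]) (by linarith)
      have n2 : 0 ≤ t * (dot u x - dot u b) := mul_nonneg ht.1.le (by linarith)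
      have hea : dot u a = dot u x := by
        have t1 : (1 - t) * (dot u x - dot u a) = 0 := by linarith
        rcases mul_eq_zero.1 t1 with h | h
        · exact absurd h (by intro hc; nlinarith [ht.2])
        · linarith
      have heb : dot u b = dot u x := by
        have t2 : t * (dot u x - dot u b) = 0 := by linarith
        rcases mul_eq_zero.1 t2 with h | h
        · exact absurd h ht.1.ne'
        · linarith
      obtain ⟨r, hr0, hball⟩ := Metric.isOpen_iff.1 isOpen_interior _ hint
      set c : ℝ := r / (2 * (‖u‖ + 1)) with hcdef
      have hc0 : 0 < c := by positivity
      have hq : (a + τ • D) + c • u ∈ Q := by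
        apply interior_subset; apply hball
        rw [Metric.mem_ball, dist_comm, dist_self_add_right, norm_smul,
          Real.norm_eq_abs, abs_of_pos hc0]
        have hcu : c * (‖u‖ + 1) = r / 2 := by
          rw [hcdef]; field_simp
        linarith [hc0, hr0]
      have hdd : dot u (a + τ • D) = dot u x := by
        rw [dot_add, dot_smul', hDdef, dot_sub, hea, heb]; ring
      have hdq := hsup _ hq
      rw [dot_add, dot_smul', hdd] at hdq
      nlinarith [dot_self_pos hu0, hc0]
    -- all edges through x are collinear with D
    have hcol : ∀ e ∈ E, ∀ y : ℝ × ℝ, seg e = segment ℝ x y → y - x ≠ 0 →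
        ∃ κ : ℝ, κ ≠ 0 ∧ y - x = κ • D := by
      intro e he y hsege hy0
      obtain ⟨u, hu0, hyd, hsup⟩ := hsupofseg e he y hsege
      have hax : a - x = (-t) • D := by rw [hDdef, ← hxeq]; module
      have hbx : b - x = (1 - t) • D := by rw [hDdef, ← hxeq]; module
      have e1 : dot u a - dot u x = -t * dot u D := by rw [← dot_sub, hax, dot_smul']
      have e2 : dot u b - dot u x = (1 - t) * dot u D := by rw [← dot_sub, hbx, dot_smul']
      have hda : dot u a ≤ dot u x := hsup a ha
      have hdb : dot u b ≤ dot u x := hsup b hb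
      have hDd : dot u D = 0 := by
        rcases lt_trichotomy (dot u D) 0 with h | h | h
        · exfalso; nlinarith [ht.1]
        · exact h
        · exfalso; nlinarith [ht.2]
      have hcr : cross D (y - x) = 0 := cross_eq_zero_of_dot hu0 hDd hyd
      obtain ⟨κ, hκ⟩ := exists_smul_of_cross_eq_zero hD0 hcr
      exact ⟨κ, fun hc => hy0 (by rw [hκ, hc, zero_smul]), hκ⟩
    -- find the two edges
    have hfind : ∀ τ : ℝ, τ ≠ 0 → 0 ≤ t + τ → t + τ ≤ 1 → ‖τ • D‖ < δ →
        ∃ f ∈ E, ∃ y κ, seg f = segment ℝ x y ∧ y - x = κ • D ∧ κ ≠ 0 ∧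
          ∃ θ : ℝ, 0 ≤ θ ∧ τ = θ * κ := by
      intro τ hτ0 hτ1 hτ2 hτδ
      have hwfr : x + τ • D ∈ frontier Q := by
        have heq : x + τ • D = a + (t + τ) • D := by rw [← hxeq]; module
        rw [heq]; exact habfr (t + τ) hτ1 hτ2
      obtain ⟨f, hfE, hxf, hwf⟩ := hgrab (x + τ • D) hwfr
        (by rwa [dist_self_add_right])
      obtain ⟨y, hyQ, hy0, hsegf⟩ := hother f hfE hxf
      obtain ⟨κ, hκ0, hκ⟩ := hcol f hfE y hsegf hy0
      refine ⟨f, hfE, y, κ, hsegf, hκ, hκ0, ?_⟩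
      rw [hsegf, segment_eq_image'] at hwf
      obtain ⟨θ, hθ, hweq⟩ := hwf
      refine ⟨θ, hθ.1, ?_⟩
      have hweq' : x + θ • (y - x) = x + τ • D := hweq
      have h1 : τ • D = θ • (y - x) := (add_left_cancel hweq').symm
      rw [hκ, smul_smul] at h1
      exact smul_cancel hD0 h1
    set τp : ℝ := min (1 - t) (δ / (2 * (‖D‖ + 1))) with hτpdef
    have hτp0 : 0 < τp := lt_min (by linarith [ht.2]) (by positivity)
    have hnorm : ∀ τ : ℝ, |τ| ≤ δ / (2 * (‖D‖ + 1)) → ‖τ • D‖ < δ := by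
      intro τ hτ
      rw [norm_smul, Real.norm_eq_abs]
      have h1 : |τ| * ‖D‖ ≤ (δ / (2 * (‖D‖ + 1))) * ‖D‖ :=
        mul_le_mul_of_nonneg_right hτ (norm_nonneg D)
      have h2 : (δ / (2 * (‖D‖ + 1))) * ‖D‖ < δ := by
        rw [div_mul_eq_mul_div, div_lt_iff₀ (by positivity)]
        nlinarith [norm_nonneg D, hδ0]
      linarith
    obtain ⟨fp, hfpE, yp, κp, hsegp, hκp, hκp0, θp, hθp0, hτθp⟩ :=
      hfind τp hτp0.ne' (by linarith [ht.1])
        (by rw [hτpdef]; linarith [min_le_left (1-t) (δ / (2 * (‖D‖ + 1)))])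
        (hnorm τp (by rw [abs_of_pos hτp0, hτpdef]; exact min_le_right _ _))
    set τm : ℝ := -(min t (δ / (2 * (‖D‖ + 1)))) with hτmdef
    have hτm0 : 0 < min t (δ / (2 * (‖D‖ + 1))) := lt_min ht.1 (by positivity)
    have hτmneg : τm < 0 := by rw [hτmdef]; linarith
    obtain ⟨fm, hfmE, ym, κm, hsegm, hκm, hκm0, θm, hθm0, hτθm⟩ :=
      hfind τm hτmneg.ne
        (by rw [hτmdef]; linarith [min_le_left t (δ / (2 * (‖D‖ + 1)))])
        (by rw [hτmdef]; linarith [hτm0, ht.2])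
        (hnorm τm (by rw [hτmdef, abs_neg, abs_of_pos hτm0]; exact min_le_right _ _))
    have hκppos : 0 < κp := by
      rcases lt_trichotomy κp 0 with h | h | h
      · exfalso
        have := mul_nonpos_of_nonneg_of_nonpos hθp0 h.le
        nlinarith
      · exact absurd h hκp0
      · exact h
    have hκmneg : κm < 0 := by
      rcases lt_trichotomy κm 0 with h | h | h
      · exact h
      · exact absurd h hκm0
      · exfalso
        have := mul_nonneg hθm0 h.le
        nlinarith
    have hxfp : x ∈ seg fp := by rw [hsegp]; exact left_mem_segment ℝ _ _
    have hxfm : x ∈ seg fm := by rw [hsegm]; exact left_mem_segment ℝ _ _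
    have hfpm : fp ≠ fm := by
      intro hc
      subst hc
      -- then segment x yp = segment x ym with opposite directions
      rw [hsegp] at hsegm
      have hymem : ym ∈ segment ℝ x yp := by
        rw [hsegm]; exact right_mem_segment ℝ x ym
      rw [segment_eq_image'] at hymem
      obtain ⟨θ, hθ, hyeq⟩ := hymem
      have h1 : ym - x = θ • (yp - x) := by rw [← hyeq]; module
      rw [hκm, hκp, smul_smul] at h1
      have h2 : κm = θ * κp := smul_cancel hD0 h1
      nlinarith [hθ.1]
    -- uniqueness
    have huniq : ∀ g ∈ E, x ∈ seg g → g = fp ∨ g = fm := by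
      intro g hg hxg
      obtain ⟨y, hyQ, hy0, hsegg⟩ := hother g hg hxg
      obtain ⟨κ, hκ0', hκ'⟩ := hcol g hg y hsegg hy0
      rcases lt_trichotomy κ 0 with h | h | h
      · right
        refine hsamedir g hg fm hfmE y ym hsegg hsegm (κm / κ)
          (by rw [div_pos_iff]; right; exact ⟨hκmneg, h⟩) ?_ hy0
        rw [hκm, hκ', smul_smul, div_mul_cancel₀ _ hκ0']
      · exact absurd h hκ0'
      · left
        refine hsamedir g hg fp hfpE y yp hsegg hsegp (κp / κ) (div_pos hκppos h) ?_ hy0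
        rw [hκp, hκ', smul_smul, div_mul_cancel₀ _ hκ0']
    -- conclude
    have hset : E.filter (fun e => x ∈ seg e) = {fp, fm} := by
      ext g
      simp only [Finset.mem_filter, Finset.mem_insert, Finset.mem_singleton]
      constructor
      · rintro ⟨hg, hxg⟩; exact huniq g hg hxg
      · rintro (rfl | rfl)
        · exact ⟨hfpE, hxfp⟩
        · exact ⟨hfmE, hxfm⟩
    rw [hset, Finset.card_insert_of_notMem (by simpa using hfpm), Finset.card_singleton]
  · -- extreme case
    push_neg at hext
    -- edges through x are pairwise non-parallel
    have hnonpar : ∀ e ∈ E, ∀ f ∈ E, ∀ y y' : ℝ × ℝ, seg e = segment ℝ x y →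
        seg f = segment ℝ x y' → y - x ≠ 0 → y' - x ≠ 0 → y ∈ Q → y' ∈ Q → e ≠ f →
        cross (y - x) (y' - x) ≠ 0 := by
      intro e he f hf y y' hsege hsegf hy0 hy'0 hyQ hy'Q hne hcr
      obtain ⟨κ, hκ⟩ := exists_smul_of_cross_eq_zero hy0 hcr
      have hκ0 : κ ≠ 0 := fun hc => hy'0 (by rw [hκ, hc, zero_smul])
      rcases lt_or_gt_of_ne hκ0 with h | h
      · -- x strictly between y and y'
        set μ : ℝ := -κ / (1 - κ) with hμdef
        have h1κ : 0 < 1 - κ := by linarith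
        have hμpos : 0 < μ := div_pos (by linarith) h1κ
        have hμlt : μ < 1 := by rw [hμdef, div_lt_one h1κ]; linarith
        have hy'eq : y' = κ • (y - x) + x := sub_eq_iff_eq_add.1 hκ
        have hcomb : μ • y + (1 - μ) • y' = x + (μ + (1 - μ) * κ) • (y - x) := by
          rw [hy'eq]; module
        have hμκ : μ + (1 - μ) * κ = 0 := by
          rw [hμdef]; field_simp; ring
        have hxcomb : μ • y + (1 - μ) • y' = x := by
          rw [hcomb, hμκ, zero_smul, add_zero]
        have hyy' : y ≠ y' := by
          intro hc
          rw [hc] at hκ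
          have h1 : (1 - κ) • (y' - x) = 0 := by
            rw [sub_smul, one_smul]
            nth_rewrite 1 [hκ]
            rw [sub_self]
          rcases smul_eq_zero.1 h1 with h' | h'
          · linarith [h1κ]
          · exact hy'0 h'
        exact hext y hyQ y' hy'Q hyy' ⟨μ, 1 - μ, hμpos, by linarith, by ring, hxcomb⟩
      · exact hne (hsamedir e he f hf y y' hsege hsegf κ h hκ hy0)
    -- at most two edges through x
    have hmax : ∀ g1 ∈ E, ∀ g2 ∈ E, ∀ g3 ∈ E, x ∈ seg g1 → x ∈ seg g2 → x ∈ seg g3 →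
        g1 ≠ g2 → g1 ≠ g3 → g2 ≠ g3 → False := by
      intro g1 hg1 g2 hg2 g3 hg3 hx1 hx2 hx3 h12 h13 h23
      obtain ⟨y1, hy1Q, hd1, hs1⟩ := hother g1 hg1 hx1
      obtain ⟨y2, hy2Q, hd2, hs2⟩ := hother g2 hg2 hx2
      obtain ⟨y3, hy3Q, hd3, hs3⟩ := hother g3 hg3 hx3
      obtain ⟨u1, hu1, hud1, hsup1⟩ := hsupofseg g1 hg1 y1 hs1
      obtain ⟨u2, hu2, hud2, hsup2⟩ := hsupofseg g2 hg2 y2 hs2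
      obtain ⟨u3, hu3, hud3, hsup3⟩ := hsupofseg g3 hg3 y3 hs3
      have hneg : ∀ u : ℝ × ℝ, (∀ q ∈ Q, dot u q ≤ dot u x) → ∀ y' : ℝ × ℝ, y' ∈ Q →
          dot u (y' - x) ≤ 0 := by
        intro u hsup y' hy'
        rw [dot_sub]; linarith [hsup y' hy']
      have hstrict : ∀ u w y' : ℝ × ℝ, u ≠ 0 → dot u w = 0 → dot u y' ≤ 0 →
          cross w y' ≠ 0 → dot u y' < 0 := by
        intro u w y' hu hw hy' hcr
        rcases lt_or_eq_of_le hy' with h | h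
        · exact h
        · exact absurd (cross_eq_zero_of_dot hu hw h) hcr
      have hrep : ∀ u w : ℝ × ℝ, u ≠ 0 → w ≠ 0 → dot u w = 0 →
          ∃ lam : ℝ, lam ≠ 0 ∧ u = lam • perp w := by
        intro u w hu hw hdotw
        obtain ⟨lam, hlam⟩ := exists_smul_of_cross_eq_zero (perp_ne_zero hw)
          (cross_perp_self w u hdotw)
        exact ⟨lam, fun hc => hu (by rw [hlam, hc, zero_smul]), hlam⟩
      have hc12 : cross (y1 - x) (y2 - x) ≠ 0 :=
        hnonpar g1 hg1 g2 hg2 y1 y2 hs1 hs2 hd1 hd2 hy1Q hy2Q h12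
      have hc13 : cross (y1 - x) (y3 - x) ≠ 0 :=
        hnonpar g1 hg1 g3 hg3 y1 y3 hs1 hs3 hd1 hd3 hy1Q hy3Q h13
      have hc23 : cross (y2 - x) (y3 - x) ≠ 0 :=
        hnonpar g2 hg2 g3 hg3 y2 y3 hs2 hs3 hd2 hd3 hy2Q hy3Q h23
      have hc21 : cross (y2 - x) (y1 - x) ≠ 0 := by
        rw [cross_antisymm]; exact neg_ne_zero.2 hc12
      have hc31 : cross (y3 - x) (y1 - x) ≠ 0 := by
        rw [cross_antisymm]; exact neg_ne_zero.2 hc13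
      have hc32 : cross (y3 - x) (y2 - x) ≠ 0 := by
        rw [cross_antisymm]; exact neg_ne_zero.2 hc23
      obtain ⟨l1, hl1, hrep1⟩ := hrep u1 (y1 - x) hu1 hd1 hud1
      obtain ⟨l2, hl2, hrep2⟩ := hrep u2 (y2 - x) hu2 hd2 hud2
      obtain ⟨l3, hl3, hrep3⟩ := hrep u3 (y3 - x) hu3 hd3 hud3
      have k12 : dot u1 (y2 - x) < 0 :=
        hstrict u1 (y1 - x) (y2 - x) hu1 hud1 (hneg u1 hsup1 y2 hy2Q) hc12
      have k13 : dot u1 (y3 - x) < 0 :=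
        hstrict u1 (y1 - x) (y3 - x) hu1 hud1 (hneg u1 hsup1 y3 hy3Q) hc13
      have k21 : dot u2 (y1 - x) < 0 :=
        hstrict u2 (y2 - x) (y1 - x) hu2 hud2 (hneg u2 hsup2 y1 hy1Q) hc21
      have k23 : dot u2 (y3 - x) < 0 :=
        hstrict u2 (y2 - x) (y3 - x) hu2 hud2 (hneg u2 hsup2 y3 hy3Q) hc23
      have k31 : dot u3 (y1 - x) < 0 :=
        hstrict u3 (y3 - x) (y1 - x) hu3 hud3 (hneg u3 hsup3 y1 hy1Q) hc31
      have k32 : dot u3 (y2 - x) < 0 :=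
        hstrict u3 (y3 - x) (y2 - x) hu3 hud3 (hneg u3 hsup3 y2 hy2Q) hc32
      have m12 : l1 * cross (y1 - x) (y2 - x) < 0 := by
        rw [← dot_smul_perp, ← hrep1]; exact k12
      have m13 : l1 * cross (y1 - x) (y3 - x) < 0 := by
        rw [← dot_smul_perp, ← hrep1]; exact k13
      have m21 : l2 * cross (y2 - x) (y1 - x) < 0 := by
        rw [← dot_smul_perp, ← hrep2]; exact k21
      have m23 : l2 * cross (y2 - x) (y3 - x) < 0 := by
        rw [← dot_smul_perp, ← hrep2]; exact k23
      have m31 : l3 * cross (y3 - x) (y1 - x) < 0 := by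
        rw [← dot_smul_perp, ← hrep3]; exact k31
      have m32 : l3 * cross (y3 - x) (y2 - x) < 0 := by
        rw [← dot_smul_perp, ← hrep3]; exact k32
      rw [cross_antisymm (y2 - x) (y1 - x)] at m21
      rw [cross_antisymm (y3 - x) (y1 - x)] at m31
      rw [cross_antisymm (y3 - x) (y2 - x)] at m32
      exact three_sign_lemma m12 m13 m21 m23 m31 m32
    -- construct the second edge through x
    obtain ⟨y₀, hy₀Q, hd₀, hs₀⟩ := hother e₀ he₀ hxe₀
    set d₀ : ℝ × ℝ := y₀ - x with hd₀def
    obtain ⟨z, hzint, hzcr⟩ : ∃ z, z ∈ interior Q ∧ cross d₀ (z - x) ≠ 0 := by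
      obtain ⟨z₀, hz₀⟩ := hdim
      by_cases h : cross d₀ (z₀ - x) = 0
      · obtain ⟨r, hr0, hball⟩ := Metric.isOpen_iff.1 isOpen_interior _ hz₀
        set c : ℝ := r / (2 * (‖perp d₀‖ + 1)) with hcdef
        have hc0 : 0 < c := by positivity
        refine ⟨z₀ + c • perp d₀, hball ?_, ?_⟩
        · rw [Metric.mem_ball, dist_comm, dist_self_add_right]
          refine norm_smul_lt_of_le hc0 hr0 ?_
          rw [hcdef]
          rw [div_le_div_iff₀ (by positivity) (by positivity)]
          nlinarith [norm_nonneg (perp d₀), hr0]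
        · have heq2 : z₀ + c • perp d₀ - x = (z₀ - x) + c • perp d₀ := by module
          rw [heq2, cross_add_right, cross_smul_right, h, zero_add]
          have hpp : cross d₀ (perp d₀) = dot d₀ d₀ := by
            unfold cross perp dot; simp only; ring
          rw [hpp]
          exact (mul_pos hc0 (dot_self_pos hd₀)).ne'
      · exact ⟨z₀, hz₀, h⟩
    set α : ℝ := (δ / 4) / (‖z - x‖ + 1) with hαdef
    have hα0 : 0 < α := by positivity
    set t₀ : ℝ := min 1 α with ht₀def
    have ht₀0 : 0 < t₀ := lt_min one_pos hα0
    have ht₀1 : t₀ ≤ 1 := min_le_left _ _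
    set aP : ℝ × ℝ := x + t₀ • (z - x) with haPdef
    set bP : ℝ × ℝ := x + α • (x - z) with hbPdef
    have haint : aP ∈ interior Q := by
      have h1 := hconv.combo_interior_closure_mem_interior hzint (subset_closure hxQ)
        ht₀0 (by linarith : (0:ℝ) ≤ 1 - t₀) (by ring)
      have heq : aP = t₀ • z + (1 - t₀) • x := by rw [haPdef]; module
      rwa [heq]
    have hbout : bP ∉ Q := extreme_out hconv hzint hp.2 hα0 hbPdef
    have hax : dist aP x < δ / 4 := by
      rw [haPdef, dist_comm, dist_self_add_right]
      exact norm_smul_lt_of_le ht₀0 (by positivity) (by rw [← hαdef]; exact min_le_right _ _)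
    have hbx : dist bP x < δ / 4 := by
      rw [hbPdef, dist_comm, dist_self_add_right]
      refine norm_smul_lt_of_le hα0 (by positivity) ?_
      rw [norm_sub_rev x z, ← hαdef]
    obtain ⟨ra, hra0, hraball⟩ := Metric.isOpen_iff.1 isOpen_interior _ haint
    obtain ⟨rb, hrb0, hrbball⟩ := Metric.isOpen_iff.1 hcl.isOpen_compl _ hbout
    set sP : ℝ := min (min (ra / (2 * (‖d₀‖ + 1))) (rb / (2 * (‖d₀‖ + 1))))
      ((δ / 4) / (‖d₀‖ + 1)) with hsPdef
    have hsP0 : 0 < sP := lt_min (lt_min (by positivity) (by positivity)) (by positivity)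
    have hsa : ‖sP • d₀‖ < ra := by
      refine norm_smul_lt_of_le hsP0 hra0 ?_
      refine le_trans (le_trans (min_le_left _ _) (min_le_left _ _)) ?_
      apply div_le_div_of_nonneg_left hra0.le (by positivity)
      nlinarith [norm_nonneg d₀]
    have hsb : ‖sP • d₀‖ < rb := by
      refine norm_smul_lt_of_le hsP0 hrb0 ?_
      refine le_trans (le_trans (min_le_left _ _) (min_le_right _ _)) ?_
      apply div_le_div_of_nonneg_left hrb0.le (by positivity)
      nlinarith [norm_nonneg d₀]
    have hsδ : ‖sP • d₀‖ < δ / 4 :=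
      norm_smul_lt_of_le hsP0 (by positivity) (min_le_right _ _)
    set aP' : ℝ × ℝ := aP - sP • d₀ with haP'def
    set bP' : ℝ × ℝ := bP - sP • d₀ with hbP'def
    have hdista : dist aP' aP = ‖sP • d₀‖ := by
      rw [haP'def, dist_eq_norm, sub_sub_cancel_left, norm_neg]
    have hdistb : dist bP' bP = ‖sP • d₀‖ := by
      rw [hbP'def, dist_eq_norm, sub_sub_cancel_left, norm_neg]
    have haP'Q : aP' ∈ Q := by
      apply interior_subset; apply hraball
      rw [Metric.mem_ball]; rw [hdista] at *; exact lt_of_le_of_lt (le_of_eq hdista) hsa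
    have hbP'Q : bP' ∉ Q := by
      intro hc
      have : bP' ∈ (Q)ᶜ := hrbball (by rw [Metric.mem_ball, hdistb]; exact hsb)
      exact this hc
    obtain ⟨cpt, hcseg, hcfr⟩ := segment_inter_frontier hcl haP'Q hbP'Q
    have hcd : dist x cpt < δ := by
      have h1 : dist aP' x ≤ δ / 2 := by
        calc dist aP' x ≤ dist aP' aP + dist aP x := dist_triangle _ _ _
        _ ≤ δ / 4 + δ / 4 := by rw [hdista]; exact add_le_add hsδ.le hax.le
        _ = δ / 2 := by ring
      have h2 : dist bP' x ≤ δ / 2 := by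
        calc dist bP' x ≤ dist bP' bP + dist bP x := dist_triangle _ _ _
        _ ≤ δ / 4 + δ / 4 := by rw [hdistb]; exact add_le_add hsδ.le hbx.le
        _ = δ / 2 := by ring
      have hsub : segment ℝ aP' bP' ⊆ Metric.closedBall x (δ / 2) :=
        (convex_closedBall x (δ / 2)).segment_subset
          (by rwa [Metric.mem_closedBall]) (by rwa [Metric.mem_closedBall])
      have := hsub hcseg
      rw [Metric.mem_closedBall] at this
      rw [dist_comm]
      linarith
    obtain ⟨f, hfE, hxf, hcf⟩ := hgrab cpt hcfr hcd
    have hfne : f ≠ e₀ := by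
      intro hfe
      subst hfe
      rw [hs₀, segment_eq_image'] at hcf
      obtain ⟨θ, hθ, hceq⟩ := hcf
      have hceq' : x + θ • d₀ = cpt := hceq
      rw [segment_eq_image'] at hcseg
      obtain ⟨σ, hσ, hcseq⟩ := hcseg
      have hcseq' : aP' + σ • (bP' - aP') = cpt := hcseq
      have hkey : (θ + sP) • d₀ = (t₀ - σ * (α + t₀)) • (z - x) := by
        calc (θ + sP) • d₀ = (x + θ • d₀) + sP • d₀ - x := by module
        _ = (aP' + σ • (bP' - aP')) + sP • d₀ - x := by rw [hceq', hcseq']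
        _ = (t₀ - σ * (α + t₀)) • (z - x) := by
            rw [haP'def, hbP'def, haPdef, hbPdef]; module
      have h3 := congrArg (cross d₀) hkey
      rw [cross_smul_right, cross_smul_right, cross_self, mul_zero] at h3
      have hco : t₀ - σ * (α + t₀) = 0 := by
        rcases mul_eq_zero.1 h3.symm with h' | h'
        · exact h'
        · exact absurd h' hzcr
      rw [hco, zero_smul] at hkey
      rcases smul_eq_zero.1 hkey with h' | h'
      · linarith [hθ.1, hsP0]
      · exact hd₀ h'
    have hge : 1 < (E.filter (fun e => x ∈ seg e)).card :=
      Finset.one_lt_card.2 ⟨e₀, Finset.mem_filter.2 ⟨he₀, hxe₀⟩,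
        f, Finset.mem_filter.2 ⟨hfE, hxf⟩, Ne.symm hfne⟩
    have hle : ¬ 2 < (E.filter (fun e => x ∈ seg e)).card := by
      intro h
      obtain ⟨g1, hg1, g2, hg2, g3, hg3, h12, h13, h23⟩ := Finset.two_lt_card.1 h
      rw [Finset.mem_filter] at hg1 hg2 hg3
      exact hmax g1 hg1.1 g2 hg2.1 g3 hg3.1 hg1.2 hg2.2 hg3.2 h12 h13 h23
    omega

include hconv hcl hdim hE hEbd hEdisj in
/-- the total lattice length of the boundary edges equals the number of lattice
points on the frontier. -/
lemma edge_count : ∑ e ∈ E, llen e = {q : ℤ × ℤ | emb q ∈ frontier Q}.ncard := by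
  have hfr : frontier Q ⊆ Q := fun y hy => hcl.closure_eq ▸ hy.1
  have hsegsub : ∀ {e'}, e' ∈ E → seg e' ⊆ frontier Q := fun {e'} he' =>
    hEbd ▸ Set.subset_biUnion_of_mem he'
  have hSunion : {q : ℤ × ℤ | emb q ∈ frontier Q}
      = ⋃ e ∈ (E : Set ((ℤ × ℤ) × (ℤ × ℤ))), {q : ℤ × ℤ | emb q ∈ seg e} := by
    ext q
    constructor
    · intro hq
      have hq' : emb q ∈ ⋃ e ∈ E, seg e := hEbd ▸ hq
      simp only [Set.mem_iUnion, exists_prop] at hq'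
      obtain ⟨e, he, h⟩ := hq'
      exact Set.mem_biUnion he h
    · intro hq
      simp only [Set.mem_iUnion, exists_prop, Finset.mem_coe] at hq
      obtain ⟨e, he, h⟩ := hq
      rw [Set.mem_setOf_eq, ← hEbd]
      exact Set.mem_biUnion he h
  have hfin : {q : ℤ × ℤ | emb q ∈ frontier Q}.Finite := by
    rw [hSunion]
    exact Set.Finite.biUnion E.finite_toSet (fun e he => lattice_on_seg_finite e (hE e he))
  set S' : Finset (ℤ × ℤ) := hfin.toFinset with hS'def
  have hS'mem : ∀ q, q ∈ S' ↔ emb q ∈ frontier Q := fun q => hfin.mem_toFinset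
  -- each edge contains llen e + 1 lattice points of S'
  have key1 : ∀ e ∈ E, (S'.filter (fun q => emb q ∈ seg e)).card = llen e + 1 := by
    intro e he
    have hset : ↑(S'.filter (fun q => emb q ∈ seg e)) = {q : ℤ × ℤ | emb q ∈ seg e} := by
      ext q
      simp only [Finset.coe_filter, Set.mem_setOf_eq, hS'mem]
      exact ⟨fun h => h.2, fun h => ⟨hsegsub he h, h⟩⟩
    have := lattice_on_seg_ncard e (hE e he)
    rw [← hset, Set.ncard_coe_finset] at this
    exact this
  -- double counting
  have hdc : ∑ e ∈ E, (llen e + 1) = ∑ q ∈ S', (E.filter (fun e => emb q ∈ seg e)).card := by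
    calc ∑ e ∈ E, (llen e + 1)
        = ∑ e ∈ E, (S'.filter (fun q => emb q ∈ seg e)).card :=
          (Finset.sum_congr rfl (fun e he => (key1 e he).symm))
      _ = ∑ e ∈ E, ∑ q ∈ S', if emb q ∈ seg e then 1 else 0 :=
          Finset.sum_congr rfl (fun e _ => Finset.card_filter _ _)
      _ = ∑ q ∈ S', ∑ e ∈ E, if emb q ∈ seg e then 1 else 0 := Finset.sum_comm
      _ = ∑ q ∈ S', (E.filter (fun e => emb q ∈ seg e)).card :=
          Finset.sum_congr rfl (fun q _ => (Finset.card_filter _ _).symm)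
  set P : ℤ × ℤ → Prop := fun q => ∃ e ∈ E, emb q ∈ openSegment ℝ (emb e.1) (emb e.2)
    with hPdef
  set S1 : Finset (ℤ × ℤ) := S'.filter P with hS1def
  set S2 : Finset (ℤ × ℤ) := S'.filter (fun q => ¬ P q) with hS2def
  have hdeg1 : ∀ q ∈ S1, (E.filter (fun e => emb q ∈ seg e)).card = 1 := by
    intro q hq
    rw [hS1def, Finset.mem_filter] at hq
    obtain ⟨e, he, hopen⟩ := hq.2
    have hsingle : E.filter (fun e' => emb q ∈ seg e') = {e} := by
      apply Finset.eq_singleton_iff_unique_mem.2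
      constructor
      · exact Finset.mem_filter.2 ⟨he, openSegment_subset_segment ℝ _ _ hopen⟩
      · intro f hf
        rw [Finset.mem_filter] at hf
        exact relint_unique hconv hcl hdim hE hEbd hEdisj he hf.1 hopen hf.2
    rw [hsingle, Finset.card_singleton]
  have hdeg2 : ∀ q ∈ S2, (E.filter (fun e => emb q ∈ seg e)).card = 2 := by
    intro q hq
    rw [hS2def, Finset.mem_filter] at hq
    have hni : ∀ e ∈ E, emb q ∉ openSegment ℝ (emb e.1) (emb e.2) := by
      intro e he hopen
      exact hq.2 ⟨e, he, hopen⟩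
    exact endpoint_two hconv hcl hdim hE hEbd hEdisj ((hS'mem q).1 hq.1) hni
  -- endpoints are in S2
  have hendS2 : ∀ e ∈ E, e.1 ∈ S2 ∧ e.2 ∈ S2 := by
    intro e he
    have hends : ∀ q : ℤ × ℤ, emb q ∈ seg e → (q = e.1 ∨ q = e.2) → q ∈ S2 := by
      intro q hq hqe
      rw [hS2def, Finset.mem_filter]
      refine ⟨(hS'mem q).2 (hsegsub he hq), ?_⟩
      rintro ⟨f, hf, hopen⟩
      have hef : e = f := relint_unique hconv hcl hdim hE hEbd hEdisj hf he hopen hq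
      subst hef
      have hne : emb e.1 = emb e.2 := by
        rcases hqe with rfl | rfl
        · exact left_mem_openSegment_iff.1 hopen
        · exact right_mem_openSegment_iff.1 hopen
      exact hE e he (emb_inj hne)
    exact ⟨hends e.1 (left_mem_segment ℝ _ _) (Or.inl rfl),
      hends e.2 (right_mem_segment ℝ _ _) (Or.inr rfl)⟩
  have hcard2 : ∀ e ∈ E, (S2.filter (fun q => q = e.1 ∨ q = e.2)).card = 2 := by
    intro e he
    have hset : S2.filter (fun q => q = e.1 ∨ q = e.2) = {e.1, e.2} := by
      ext q
      simp only [Finset.mem_filter, Finset.mem_insert, Finset.mem_singleton]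
      constructor
      · rintro ⟨-, h⟩; exact h
      · rintro (rfl | rfl)
        · exact ⟨(hendS2 e he).1, Or.inl rfl⟩
        · exact ⟨(hendS2 e he).2, Or.inr rfl⟩
    rw [hset, Finset.card_insert_of_notMem (by simpa using hE e he),
      Finset.card_singleton]
  have hdegS2 : ∀ q ∈ S2, (E.filter (fun e => q = e.1 ∨ q = e.2)).card = 2 := by
    intro q hq
    have hq2 := hq
    rw [hS2def, Finset.mem_filter] at hq2
    have hfeq : E.filter (fun e => q = e.1 ∨ q = e.2)
        = E.filter (fun e => emb q ∈ seg e) := by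
      ext f
      simp only [Finset.mem_filter, and_congr_right_iff]
      intro hf
      constructor
      · rintro (rfl | rfl)
        · exact left_mem_segment ℝ _ _
        · exact right_mem_segment ℝ _ _
      · intro hmem
        have hmem' := hmem
        rw [seg, ← insert_endpoints_openSegment] at hmem'
        rcases Set.mem_insert_iff.1 hmem' with h1 | h2
        · exact Or.inl (emb_inj h1)
        · rcases Set.mem_insert_iff.1 h2 with h2' | h3
          · exact Or.inr (emb_inj h2')
          · exact absurd ⟨f, hf, h3⟩ hq2.2
    rw [hfeq]
    exact hdeg2 q hq
  have hES2 : 2 * E.card = 2 * S2.card := by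
    have hXY : ∑ e ∈ E, (S2.filter (fun q => q = e.1 ∨ q = e.2)).card
        = ∑ q ∈ S2, (E.filter (fun e => q = e.1 ∨ q = e.2)).card := by
      calc ∑ e ∈ E, (S2.filter (fun q => q = e.1 ∨ q = e.2)).card
          = ∑ e ∈ E, ∑ q ∈ S2, if q = e.1 ∨ q = e.2 then 1 else 0 :=
            Finset.sum_congr rfl (fun e _ => Finset.card_filter _ _)
        _ = ∑ q ∈ S2, ∑ e ∈ E, if q = e.1 ∨ q = e.2 then 1 else 0 := Finset.sum_comm
        _ = ∑ q ∈ S2, (E.filter (fun e => q = e.1 ∨ q = e.2)).card :=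
            Finset.sum_congr rfl (fun q _ => (Finset.card_filter _ _).symm)
    have h1 : ∑ e ∈ E, (S2.filter (fun q => q = e.1 ∨ q = e.2)).card = 2 * E.card := by
      rw [Finset.sum_congr rfl hcard2, Finset.sum_const, smul_eq_mul, mul_comm]
    have h2 : ∑ q ∈ S2, (E.filter (fun e => q = e.1 ∨ q = e.2)).card = 2 * S2.card := by
      rw [Finset.sum_congr rfl hdegS2, Finset.sum_const, smul_eq_mul, mul_comm]
    rw [h1, h2] at hXY
    exact hXY
  have hsplit : ∑ q ∈ S', (E.filter (fun e => emb q ∈ seg e)).card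
      = S1.card + 2 * S2.card := by
    have hsplit0 : ∑ q ∈ S', (E.filter (fun e => emb q ∈ seg e)).card
        = ∑ q ∈ S1, (E.filter (fun e => emb q ∈ seg e)).card
          + ∑ q ∈ S2, (E.filter (fun e => emb q ∈ seg e)).card := by
      rw [hS1def, hS2def]
      exact (Finset.sum_filter_add_sum_filter_not S' P _).symm
    rw [hsplit0]
    congr 1
    · rw [Finset.sum_congr rfl hdeg1, Finset.sum_const, smul_eq_mul, mul_one]
    · rw [Finset.sum_congr rfl hdeg2, Finset.sum_const, smul_eq_mul, mul_comm]
  have hS'card : S1.card + S2.card = S'.card := by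
    rw [hS1def, hS2def]
    exact Finset.card_filter_add_card_filter_not P
  have hsum_llen : ∑ e ∈ E, (llen e + 1) = (∑ e ∈ E, llen e) + E.card := by
    rw [Finset.sum_add_distrib, Finset.sum_const, smul_eq_mul, mul_one]
  have hncard : {q : ℤ × ℤ | emb q ∈ frontier Q}.ncard = S'.card :=
    Set.ncard_eq_toFinset_card _ hfin
  omega

end Main

lemma area_count (T : Finset (Fin 3 → ℤ × ℤ)) (Q : Set (ℝ × ℝ))
    (hcover : (⋃ σ ∈ T, triSet σ) = Q)
    (hdisj : ∀ σ ∈ T, ∀ τ ∈ T, σ ≠ τ → volume (triSet σ ∩ triSet τ) = 0) :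
    ∑ σ ∈ T, nvol2 (triSet σ) = nvol2 Q := by
  have hcomp : ∀ σ : Fin 3 → ℤ × ℤ, IsCompact (triSet σ) := by
    intro σ
    exact Set.Finite.isCompact_convexHull ℝ ((Set.finite_range σ).image emb)
  have hmeas : ∀ σ ∈ T, NullMeasurableSet (triSet σ) volume := fun σ _ =>
    (hcomp σ).isClosed.measurableSet.nullMeasurableSet
  have hvol : volume Q = ∑ σ ∈ T, volume (triSet σ) := by
    rw [← hcover]
    exact measure_biUnion_finset₀ (fun σ hσ τ hτ hne => hdisj σ hσ τ hτ hne) hmeas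
  have hfin : ∀ σ ∈ T, volume (triSet σ) ≠ ⊤ := fun σ _ =>
    (hcomp σ).measure_lt_top.ne
  unfold nvol2
  rw [hvol, ENNReal.toReal_sum hfin, Finset.mul_sum]

end HW

/-- The degree of the Hurwitz form in Plücker coordinates, computed as
`(1/2)·Σᵢ ξ_T(ωᵢ)` for any triangulation `T` of `(Q, A)`, equals
`3·vol(Q) − vol(∂Q)`. -/


theorem stmt3 (A : Finset (ℤ × ℤ)) (T : Finset (Fin 3 → ℤ × ℤ))
    (E : Finset ((ℤ × ℤ) × (ℤ × ℤ)))
    (Q : Set (ℝ × ℝ)) (hQ : Q = convexHull ℝ (emb '' (A : Set (ℤ × ℤ))))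
    (hdim : (interior Q).Nonempty)
    (hvert : ∀ σ ∈ T, ∀ i, σ i ∈ A)
    (hind : ∀ σ ∈ T, AffineIndependent ℝ (emb ∘ σ))
    (hcover : (⋃ σ ∈ T, triSet σ) = Q)
    (hdisj : ∀ σ ∈ T, ∀ τ ∈ T, σ ≠ τ → volume (triSet σ ∩ triSet τ) = 0)
    (hE : ∀ e ∈ E, e.1 ∈ A ∧ e.2 ∈ A ∧ e.1 ≠ e.2)
    (hEbd : (⋃ e ∈ E, seg e) = frontier Q)
    (hEdisj : ∀ e ∈ E, ∀ f ∈ E, e ≠ f → (seg e ∩ seg f).Subsingleton)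
    (hTE : ∀ e ∈ E, ∃ σ ∈ T, (∃ i, σ i = e.1) ∧ (∃ j, σ j = e.2)) :
    (1 / 2 : ℝ) * ∑ ω ∈ A, xiT T E ω =
      3 * nvol2 Q - (({p : ℤ × ℤ | emb p ∈ frontier Q}).ncard : ℝ) := by
    classical
  have hQconv : Convex ℝ Q := hQ ▸ convex_convexHull ℝ _
  have hQcl : IsClosed Q := by
    rw [hQ]
    exact (Set.Finite.isCompact_convexHull ℝ ((A.finite_toSet).image emb)).isClosed
  have hE' : ∀ e ∈ E, e.1 ≠ e.2 := fun e he => (hE e he).2.2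
  have harea : ∑ σ ∈ T, nvol2 (triSet σ) = nvol2 Q := HW.area_count T Q hcover hdisj
  -- the eta2 sum
  have h2 : ∑ ω ∈ A, eta2 T ω = 3 * nvol2 Q := by
    unfold eta2
    rw [Finset.sum_comm]
    have hinner : ∀ σ ∈ T, (∑ ω ∈ A, if ∃ i, σ i = ω then nvol2 (triSet σ) else 0)
        = 3 * nvol2 (triSet σ) := by
      intro σ hσ
      rw [← Finset.sum_filter]
      have hfilter : A.filter (fun ω => ∃ i, σ i = ω) = Finset.image σ Finset.univ := by
        ext ω
        simp only [Finset.mem_filter, Finset.mem_image, Finset.mem_univ, true_and]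
        constructor
        · rintro ⟨-, i, rfl⟩; exact ⟨i, rfl⟩
        · rintro ⟨i, rfl⟩; exact ⟨hvert σ hσ i, i, rfl⟩
      have hinj : Function.Injective σ := by
        intro i j hij
        exact (hind σ hσ).injective (by simp [Function.comp, hij])
      rw [Finset.sum_const, hfilter, Finset.card_image_of_injective _ hinj,
        Finset.card_univ]
      simp [Fintype.card_fin]
    rw [Finset.sum_congr rfl hinner, ← Finset.mul_sum, harea]
  -- the eta1 sum
  have h1 : ∑ ω ∈ A, eta1 E ω = 2 * ∑ e ∈ E, (llen e : ℝ) := by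
    unfold eta1
    rw [Finset.sum_comm]
    have hinner : ∀ e ∈ E, (∑ ω ∈ A, if e.1 = ω ∨ e.2 = ω then (llen e : ℝ) else 0)
        = 2 * (llen e : ℝ) := by
      intro e he
      rw [← Finset.sum_filter]
      have hfilter : A.filter (fun ω => e.1 = ω ∨ e.2 = ω) = {e.1, e.2} := by
        ext ω
        simp only [Finset.mem_filter, Finset.mem_insert, Finset.mem_singleton]
        constructor
        · rintro ⟨-, rfl | rfl⟩
          · exact Or.inl rfl
          · exact Or.inr rfl
        · rintro (rfl | rfl)
          · exact ⟨(hE e he).1, Or.inl rfl⟩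
          · exact ⟨(hE e he).2.1, Or.inr rfl⟩
      rw [hfilter, Finset.sum_const,
        Finset.card_insert_of_notMem (by simpa using hE' e he), Finset.card_singleton]
      simp
    rw [Finset.sum_congr rfl hinner, ← Finset.mul_sum]
  -- the boundary lattice count
  have hllen : ∑ e ∈ E, (llen e : ℝ)
      = (({p : ℤ × ℤ | emb p ∈ frontier Q}).ncard : ℝ) := by
    have hec := HW.edge_count hQconv hQcl hdim hE' hEbd hEdisj
    rw [← hec]
    push_cast
    rfl
  -- assemble
  unfold xiT
  rw [Finset.sum_sub_distrib, ← Finset.mul_sum, h2, h1, hllen]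
  ring
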